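/- Let A be an m×L matrix with entries in {0,1}, c ∈ ℕ^m, and suppose b ∈ ℕ^L is a solution of A·x = c with a minimal number k of non-zero entries among all solutions over ℕ. Then k ≤ m·log₂(k+1). -/

import Mathlib

theorem minimal_solution_support_bound (m L : ℕ)
    (A : Matrix (Fin m) (Fin L) ℕ) (hA : ∀ i j, A i j = 0 ∨ A i j = 1)
    (c : Fin m → ℕ) (b : Fin L → ℕ) (hb : A.mulVec b = c)
    (hmin : ∀ b' : Fin L → ℕ, A.mulVec b' = c →
      (Finset.univ.filter (fun j => b j ≠ 0)).card ≤
        (Finset.univ.filter (fun j => b' j ≠ 0)).card)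
    (k : ℕ) (hk : k = (Finset.univ.filter (fun j => b j ≠ 0)).card) :
    (k : ℝ) ≤ m * Real.logb 2 (k + 1) := by
  classical
  set F := Finset.univ.filter (fun j => b j ≠ 0) with hF
  -- main combinatorial step
  have main : ∀ S T : Finset (Fin L), S ⊆ F → T ⊆ F →
      (∀ i, ∑ j ∈ S \ T, A i j = ∑ j ∈ T \ S, A i j) → (S \ T).Nonempty → False := by
    intro S T hSF hTF hsum hne
    obtain ⟨j₀, hj₀, hminb⟩ := (S \ T).exists_min_image b hne
    set t : ℕ := b j₀ with ht
    set b' : Fin L → ℕ := fun j =>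
      if j ∈ S \ T then b j - t else if j ∈ T \ S then b j + t else b j with hb'def
    have hb' : A.mulVec b' = c := by
      rw [← hb]
      funext i
      have : ((A.mulVec b' i : ℕ) : ℤ) = ((A.mulVec b i : ℕ) : ℤ) := by
        simp only [Matrix.mulVec, dotProduct]
        push_cast
        have cast_eq : ∀ j, (b' j : ℤ) = (b j : ℤ) +
            (if j ∈ S \ T then -(t : ℤ) else if j ∈ T \ S then (t : ℤ) else 0) := by
          intro j
          simp only [hb'def]
          split_ifs with h1 h2
          · rw [Nat.cast_sub (hminb j h1)]; ring
          · push_cast; ring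
          · simp
        calc ∑ j, (A i j : ℤ) * (b' j : ℤ)
            = ∑ j, ((A i j : ℤ) * (b j : ℤ) + (A i j : ℤ) *
              (if j ∈ S \ T then -(t : ℤ) else if j ∈ T \ S then (t : ℤ) else 0)) := by
              refine Finset.sum_congr rfl fun j _ => ?_
              rw [cast_eq j]; ring
          _ = ∑ j, (A i j : ℤ) * (b j : ℤ) + ∑ j, (A i j : ℤ) *
              (if j ∈ S \ T then -(t : ℤ) else if j ∈ T \ S then (t : ℤ) else 0) := by
              rw [Finset.sum_add_distrib]
          _ = ∑ j, (A i j : ℤ) * (b j : ℤ) := by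
              have hzero : ∑ j, (A i j : ℤ) *
                  (if j ∈ S \ T then -(t : ℤ) else if j ∈ T \ S then (t : ℤ) else 0) = 0 := by
                rw [← Finset.sum_subset (Finset.subset_univ ((S \ T) ∪ (T \ S)))
                  (by intro j _ hj
                      simp only [Finset.mem_union, not_or] at hj
                      rw [if_neg hj.1, if_neg hj.2, mul_zero])]
                rw [Finset.sum_union (disjoint_sdiff_sdiff)]
                have h1 : ∑ j ∈ S \ T, (A i j : ℤ) *
                    (if j ∈ S \ T then -(t : ℤ) else if j ∈ T \ S then (t : ℤ) else 0)
                    = -(t : ℤ) * ∑ j ∈ S \ T, (A i j : ℤ) := by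
                  rw [Finset.mul_sum]
                  refine Finset.sum_congr rfl fun j hj => ?_
                  rw [if_pos hj]; ring
                have h2 : ∑ j ∈ T \ S, (A i j : ℤ) *
                    (if j ∈ S \ T then -(t : ℤ) else if j ∈ T \ S then (t : ℤ) else 0)
                    = (t : ℤ) * ∑ j ∈ T \ S, (A i j : ℤ) := by
                  rw [Finset.mul_sum]
                  refine Finset.sum_congr rfl fun j hj => ?_
                  have : j ∉ S \ T := fun h =>
                    (Finset.mem_sdiff.mp hj).2 (Finset.mem_sdiff.mp h).1
                  rw [if_neg this, if_pos hj]; ring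
                rw [h1, h2]
                have := hsum i
                have hcast : (∑ j ∈ S \ T, (A i j : ℤ)) = ∑ j ∈ T \ S, (A i j : ℤ) := by
                  exact_mod_cast congrArg (Nat.cast : ℕ → ℤ) this
                rw [hcast]; ring
              rw [hzero, add_zero]
      exact_mod_cast this
    have hsubset : (Finset.univ.filter (fun j => b' j ≠ 0)) ⊂ F := by
      rw [hF]
      constructor
      · intro j hj
        simp only [Finset.mem_filter, Finset.mem_univ, true_and] at hj ⊢
        simp only [hb'def] at hj
        split_ifs at hj with h1 h2
        · omega
        · have := hTF (Finset.mem_sdiff.mp h2).1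
          rw [hF] at this
          simpa using (Finset.mem_filter.mp this).2
        · exact hj
      · intro hsup
        have hj₀F : j₀ ∈ F := hSF (Finset.mem_sdiff.mp hj₀).1
        rw [hF] at hj₀F
        have := hsup hj₀F
        simp only [Finset.mem_filter, Finset.mem_univ, true_and] at this
        apply this
        simp only [hb'def, if_pos hj₀]
        omega
    have h1 := hmin b' hb'
    have h2 := Finset.card_lt_card hsubset
    omega
  -- pigeonhole: 2^k ≤ (k+1)^m
  have key : 2 ^ k ≤ (k + 1) ^ m := by
    by_contra hlt
    push_neg at hlt
    obtain ⟨S, hS, T, hT, hne, hfeq⟩ :=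
      Finset.exists_ne_map_eq_of_card_lt_of_maps_to
        (s := F.powerset)
        (t := Fintype.piFinset fun _ : Fin m => Finset.range (k + 1))
        (f := fun S i => ∑ j ∈ S, A i j)
        (by
          rw [Finset.card_powerset, Fintype.card_piFinset]
          simp only [Finset.card_range, Finset.prod_const, Finset.card_univ, Fintype.card_fin]
          rw [← hk]
          exact hlt)
        (by
          intro S hS
          rw [Finset.mem_coe, Fintype.mem_piFinset]
          intro i
          rw [Finset.mem_range, Nat.lt_succ_iff, hk]
          calc ∑ j ∈ S, A i j ≤ ∑ j ∈ S, 1 :=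
                Finset.sum_le_sum fun j _ => by rcases hA i j with h | h <;> omega
            _ = S.card := by simp
            _ ≤ F.card := Finset.card_le_card (Finset.mem_powerset.mp hS))
    have hS' := Finset.mem_powerset.mp hS
    have hT' := Finset.mem_powerset.mp hT
    have hdiffsum : ∀ i, ∑ j ∈ S \ T, A i j = ∑ j ∈ T \ S, A i j := by
      intro i
      have hfull : ∑ j ∈ S, A i j = ∑ j ∈ T, A i j := congrFun hfeq i
      have e1 : ∑ j ∈ S ∩ T, A i j + ∑ j ∈ S \ T, A i j = ∑ j ∈ S, A i j :=
        Finset.sum_inter_add_sum_sdiff S T _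
      have e2 : ∑ j ∈ T ∩ S, A i j + ∑ j ∈ T \ S, A i j = ∑ j ∈ T, A i j :=
        Finset.sum_inter_add_sum_sdiff T S _
      rw [Finset.inter_comm] at e2
      omega
    by_cases hST : S \ T = ∅
    · have hSsubT : S ⊆ T := Finset.sdiff_eq_empty_iff_subset.mp hST
      have hTS : (T \ S).Nonempty := by
        rw [Finset.sdiff_nonempty]
        exact fun h => hne (Finset.Subset.antisymm hSsubT h)
      exact main T S hT' hS' (fun i => (hdiffsum i).symm) hTS
    · exact main S T hS' hT' hdiffsum (Finset.nonempty_iff_ne_empty.mpr hST)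
  -- conclude with logs
  have h2 : ((2 : ℝ)) ^ k ≤ ((k : ℝ) + 1) ^ m := by exact_mod_cast key
  have hlog := Real.logb_le_logb_of_le (b := 2) (by norm_num) (by positivity) h2
  rw [Real.logb_pow, Real.logb_pow, Real.logb_self_eq_one (by norm_num)] at hlog
  simpa using hlog
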